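/- arXiv:1501.04719 — 5 statements merged into one kernel-verified Lean document; each statement's English description precedes it below -/
import Mathlib

section
/- Let X, Y, μ > 0 and let (fˣ, fʸ, fᶻ, τˣ, τʸ, τᶻ) satisfy the six wrench-cone inequalities |fˣ| ≤ μ fᶻ, |fʸ| ≤ μ fᶻ, fᶻ > 0, |τˣ| ≤ Y fᶻ, |τʸ| ≤ X fᶻ, τ_min ≤ τᶻ ≤ τ_max, where τ_min = −μ(X+Y)fᶻ + |Y fˣ − μτˣ| + |X fʸ − μτʸ| and τ_max = μ(X+Y)fᶻ − |Y fˣ + μτˣ| − |X fʸ + μτʸ|. Then τ_min ≤ τ_max, i.e., the yaw-torque interval is nonempty. -/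
/-- The yaw-torque interval of the rectangular wrench cone is nonempty. -/
theorem yaw_interval_nonempty
    (X Y μ fx fy fz τx τy : ℝ) (hX : 0 < X) (hY : 0 < Y) (hμ : 0 < μ)
    (h1 : |fx| ≤ μ * fz) (h2 : |fy| ≤ μ * fz) (h3 : 0 < fz)
    (h4 : |τx| ≤ Y * fz) (h5 : |τy| ≤ X * fz) :
    -μ * (X + Y) * fz + |Y * fx - μ * τx| + |X * fy - μ * τy| ≤
      μ * (X + Y) * fz - |Y * fx + μ * τx| - |X * fy + μ * τy| := by
  have hfx := abs_le.mp h1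
  have hfy := abs_le.mp h2
  have hτx := abs_le.mp h4
  have hτy := abs_le.mp h5
  have b1 : Y * fx ≤ μ * (Y * fz) := by nlinarith [hfx.2]
  have b2 : -(μ * (Y * fz)) ≤ Y * fx := by nlinarith [hfx.1]
  have b3 : X * fy ≤ μ * (X * fz) := by nlinarith [hfy.2]
  have b4 : -(μ * (X * fz)) ≤ X * fy := by nlinarith [hfy.1]
  have b5 : μ * τx ≤ μ * (Y * fz) := by nlinarith [hτx.2]
  have b6 : -(μ * (Y * fz)) ≤ μ * τx := by nlinarith [hτx.1]
  have b7 : μ * τy ≤ μ * (X * fz) := by nlinarith [hτy.2]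
  have b8 : -(μ * (X * fz)) ≤ μ * τy := by nlinarith [hτy.1]
  have hsum : μ * (X + Y) * fz = μ * (Y * fz) + μ * (X * fz) := by ring
  rcases abs_cases (Y * fx - μ * τx) with ⟨e1, _⟩ | ⟨e1, _⟩ <;>
  rcases abs_cases (X * fy - μ * τy) with ⟨e2, _⟩ | ⟨e2, _⟩ <;>
  rcases abs_cases (Y * fx + μ * τx) with ⟨e3, _⟩ | ⟨e3, _⟩ <;>
  rcases abs_cases (X * fy + μ * τy) with ⟨e4, _⟩ | ⟨e4, _⟩ <;>
  rw [e1, e2, e3, e4] <;> linarith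
end

section
/- With τ_min = −μ(X+Y)fᶻ + |Yfˣ − μτˣ| + |Xfʸ − μτʸ| and τ_max = μ(X+Y)fᶻ − |Yfˣ + μτˣ| − |Xfʸ + μτʸ|, the midpoint (τ_min + τ_max)/2 equals sgn(−fˣτˣ)·min(Y|fˣ|, μ|τˣ|) + sgn(−fʸτʸ)·min(X|fʸ|, μ|τʸ|). -/
lemma key_abs (a b : ℝ) (ha : 0 ≤ a) (hb : 0 ≤ b) :
    |a - b| - |a + b| = -2 * min a b := by
  rw [abs_of_nonneg (by linarith : 0 ≤ a + b)]
  rcases le_total a b with h | h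
  · rw [min_eq_left h, abs_of_nonpos (by linarith)]; ring
  · rw [min_eq_right h, abs_of_nonneg (by linarith)]; ring

lemma aux_abs (a b : ℝ) : |a - b| - |a + b| = 2 * Real.sign (-(a*b)) * min |a| |b| := by
  rcases lt_trichotomy (a*b) 0 with h | h | h
  · rw [Real.sign_of_pos (by linarith : (0:ℝ) < -(a*b))]
    rcases lt_trichotomy a 0 with ha | rfl | ha
    · have hb : 0 < b := by nlinarith
      have k := key_abs (-a) b (by linarith) hb.le
      rw [show (-a) - b = -(a + b) by ring, abs_neg,
        show (-a) + b = -(a - b) by ring, abs_neg] at k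
      rw [abs_of_neg ha, abs_of_pos hb]
      linarith
    · simp at h
    · have hb : b < 0 := by nlinarith
      have k := key_abs a (-b) ha.le (by linarith)
      rw [show a - (-b) = a + b by ring, show a + (-b) = a - b by ring] at k
      rw [abs_of_pos ha, abs_of_neg hb]
      linarith
  · have hs : Real.sign (-(a*b)) = 0 := by rw [h]; simp
    rcases mul_eq_zero.mp h with rfl | rfl <;> simp [hs, abs_sub_comm]
  · rw [Real.sign_of_neg (by linarith : -(a*b) < 0)]
    rcases lt_trichotomy a 0 with ha | rfl | ha
    · have hb : b < 0 := by nlinarith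
      have k := key_abs (-a) (-b) (by linarith) (by linarith)
      rw [show (-a) - (-b) = -(a - b) by ring, abs_neg,
        show (-a) + (-b) = -(a + b) by ring, abs_neg] at k
      rw [abs_of_neg ha, abs_of_neg hb]
      linarith
    · simp at h
    · have hb : 0 < b := by nlinarith
      have k := key_abs a b ha.le hb.le
      rw [abs_of_pos ha, abs_of_pos hb]
      linarith

lemma aux_sign (c : ℝ) (hc : 0 < c) (x : ℝ) : Real.sign (c * x) = Real.sign x := by
  rcases lt_trichotomy x 0 with h | rfl | h
  · rw [Real.sign_of_neg h, Real.sign_of_neg (by nlinarith)]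
  · simp
  · rw [Real.sign_of_pos h, Real.sign_of_pos (by nlinarith)]

/-- The midpoint of the yaw-torque interval equals the "safe" yaw torque. -/
theorem yaw_midpoint_eq_safe
    (X Y μ fx fy fz τx τy : ℝ) (hX : 0 < X) (hY : 0 < Y) (hμ : 0 < μ) :
    ((-μ * (X + Y) * fz + |Y * fx - μ * τx| + |X * fy - μ * τy|) +
      (μ * (X + Y) * fz - |Y * fx + μ * τx| - |X * fy + μ * τy|)) / 2 =
    Real.sign (-(fx * τx)) * min (Y * |fx|) (μ * |τx|) +
      Real.sign (-(fy * τy)) * min (X * |fy|) (μ * |τy|) := by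
  have h1 := aux_abs (Y * fx) (μ * τx)
  have h2 := aux_abs (X * fy) (μ * τy)
  have s1 : Real.sign (-(Y * fx * (μ * τx))) = Real.sign (-(fx * τx)) := by
    rw [show -(Y * fx * (μ * τx)) = (Y * μ) * (-(fx * τx)) by ring,
      aux_sign _ (by positivity)]
  have s2 : Real.sign (-(X * fy * (μ * τy))) = Real.sign (-(fy * τy)) := by
    rw [show -(X * fy * (μ * τy)) = (X * μ) * (-(fy * τy)) by ring,
      aux_sign _ (by positivity)]
  have e1 : min |Y * fx| |μ * τx| = min (Y * |fx|) (μ * |τx|) := by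
    rw [abs_mul, abs_mul, abs_of_pos hY, abs_of_pos hμ]
  have e2 : min |X * fy| |μ * τy| = min (X * |fy|) (μ * |τy|) := by
    rw [abs_mul, abs_mul, abs_of_pos hX, abs_of_pos hμ]
  rw [s1, e1] at h1
  rw [s2, e2] at h2
  linarith
end

section
/- Suppose |fˣ| = μfᶻ (Coulomb friction saturated in x), |τˣ| = Yfᶻ, |fʸ| = μfᶻ, and |τʸ| = Xfᶻ with fᶻ > 0, and that fˣτˣ ≤ 0 and fʸτʸ ≤ 0 are not assumed; if additionally max(Y|fˣ|, μ|τˣ|) + max(X|fʸ|, μ|τʸ|) = μ(X+Y)fᶻ, then τ_min = τ_max, i.e., there is a unique admissible yaw torque τᶻ = sgn(−fˣτˣ)min(Y|fˣ|, μ|τˣ|) + sgn(−fʸτʸ)min(X|fʸ|, μ|τʸ|). -/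
lemma aux_abssign (a b : ℝ) (h : |a| = |b|) (h0 : 0 < |a|) :
    |a - b| = |a| + Real.sign (-(a * b)) * |a| ∧
    |a + b| = |a| - Real.sign (-(a * b)) * |a| := by
  have ha : a ≠ 0 := by intro h'; simp [h'] at h0
  have hb : b ≠ 0 := by intro h'; rw [h', abs_zero] at h; rw [h] at h0; exact lt_irrefl 0 h0
  rcases lt_trichotomy (a * b) 0 with hab | hab | hab
  · have heq : a = -b := by
      rcases abs_cases a with ⟨e1, _⟩ | ⟨e1, _⟩ <;>
        rcases abs_cases b with ⟨e2, _⟩ | ⟨e2, _⟩ <;> nlinarith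
    rw [Real.sign_of_pos (by linarith), heq]
    constructor
    · rw [show -b - b = -(b+b) by ring, abs_neg, abs_neg b]
      rcases abs_cases b with ⟨e2, _⟩ | ⟨e2, _⟩ <;>
        rcases abs_cases (b + b) with ⟨e3, _⟩ | ⟨e3, _⟩ <;> nlinarith
    · simp
  · exact absurd hab (mul_ne_zero ha hb)
  · have heq : a = b := by
      rcases abs_cases a with ⟨e1, _⟩ | ⟨e1, _⟩ <;>
        rcases abs_cases b with ⟨e2, _⟩ | ⟨e2, _⟩ <;> nlinarith
    rw [Real.sign_of_neg (by linarith), heq]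
    constructor
    · simp
    · rw [show b + b = b * 2 by ring, abs_mul]
      simp [abs_of_pos]
      ring

/-- When the other wrench-cone constraints are saturated, the yaw-torque
interval degenerates to the single safe value. -/
theorem yaw_unique_when_saturated
    (X Y μ fx fy fz τx τy : ℝ) (hX : 0 < X) (hY : 0 < Y) (hμ : 0 < μ)
    (hfz : 0 < fz)
    (h1 : |fx| = μ * fz) (h2 : |τx| = Y * fz)
    (h3 : |fy| = μ * fz) (h4 : |τy| = X * fz)
    (hsat : max (Y * |fx|) (μ * |τx|) + max (X * |fy|) (μ * |τy|) =
      μ * (X + Y) * fz) :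
    (-μ * (X + Y) * fz + |Y * fx - μ * τx| + |X * fy - μ * τy|) =
      (μ * (X + Y) * fz - |Y * fx + μ * τx| - |X * fy + μ * τy|) ∧
    (-μ * (X + Y) * fz + |Y * fx - μ * τx| + |X * fy - μ * τy|) =
      Real.sign (-(fx * τx)) * min (Y * |fx|) (μ * |τx|) +
        Real.sign (-(fy * τy)) * min (X * |fy|) (μ * |τy|) := by
  have ha : |Y * fx| = μ * (Y * fz) := by rw [abs_mul, abs_of_pos hY, h1]; ring
  have hb : |μ * τx| = μ * (Y * fz) := by rw [abs_mul, abs_of_pos hμ, h2]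
  have hc : |X * fy| = μ * (X * fz) := by rw [abs_mul, abs_of_pos hX, h3]; ring
  have hd : |μ * τy| = μ * (X * fz) := by rw [abs_mul, abs_of_pos hμ, h4]
  have hfx : fx ≠ 0 := by
    intro h'; rw [h', abs_zero] at h1; nlinarith
  have hτx : τx ≠ 0 := by
    intro h'; rw [h', abs_zero] at h2; nlinarith
  have hfy : fy ≠ 0 := by
    intro h'; rw [h', abs_zero] at h3; nlinarith
  have hτy : τy ≠ 0 := by
    intro h'; rw [h', abs_zero] at h4; nlinarith
  obtain ⟨e1, e2⟩ := aux_abssign (Y * fx) (μ * τx) (by rw [ha, hb]) (by rw [ha]; positivity)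
  obtain ⟨e3, e4⟩ := aux_abssign (X * fy) (μ * τy) (by rw [hc, hd]) (by rw [hc]; positivity)
  have s1 : Real.sign (-(Y * fx * (μ * τx))) = Real.sign (-(fx * τx)) := by
    rcases lt_or_gt_of_ne (mul_ne_zero hfx hτx) with h | h
    · rw [Real.sign_of_pos (by nlinarith [mul_pos (mul_pos hY hμ) (neg_pos.mpr h)]),
        Real.sign_of_pos (by linarith)]
    · rw [Real.sign_of_neg (by nlinarith [mul_pos (mul_pos hY hμ) h]),
        Real.sign_of_neg (by linarith)]
  have s2 : Real.sign (-(X * fy * (μ * τy))) = Real.sign (-(fy * τy)) := by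
    rcases lt_or_gt_of_ne (mul_ne_zero hfy hτy) with h | h
    · rw [Real.sign_of_pos (by nlinarith [mul_pos (mul_pos hX hμ) (neg_pos.mpr h)]),
        Real.sign_of_pos (by linarith)]
    · rw [Real.sign_of_neg (by nlinarith [mul_pos (mul_pos hX hμ) h]),
        Real.sign_of_neg (by linarith)]
  have m1 : min (Y * |fx|) (μ * |τx|) = μ * (Y * fz) := by
    rw [h1, h2, show Y * (μ * fz) = μ * (Y * fz) by ring, min_self]
  have m2 : min (X * |fy|) (μ * |τy|) = μ * (X * fz) := by
    rw [h3, h4, show X * (μ * fz) = μ * (X * fz) by ring, min_self]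
  rw [s1] at e1 e2
  rw [s2] at e3 e4
  constructor
  · rw [e1, e2, e3, e4, ha, hc]; ring
  · rw [e1, e3, ha, hc, m1, m2]; ring
end

section
/- Let μ > 0, p_x, p_y > 0 with p_x + p_y = 1. Fix K₁, K₂, K₃ ∈ ℝ. There exist C₁, C₂ ∈ [−1,1] and γ_x, γ_x', γ_y, γ_y' ∈ ℝ with K₁ = γ_x + γ_x', K₂ = γ_y + γ_y', K₃ = p_x(γ_y − γ_y') − p_y(γ_x − γ_x'), 2|γ_x| ≤ 1 + C₁, 2|γ_x'| ≤ 1 − C₁, 2|γ_y| ≤ 1 − C₂, 2|γ_y'| ≤ 1 + C₂, if and only if |K₁| ≤ 1, |K₂| ≤ 1, and there exist C₁, C₂ ∈ [−1,1] with −1 + p_y|K₁ − C₁| + p_x|K₂ − C₂| ≤ K₃ ≤ 1 − p_y|K₁ + C₁| − p_x|K₂ + C₂|. -/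
set_option maxHeartbeats 1000000


/-- Fourier–Motzkin elimination of the γ variables in the normalized system. -/
theorem gamma_elimination
    (μ px py K₁ K₂ K₃ : ℝ) (hμ : 0 < μ) (hpx : 0 < px) (hpy : 0 < py)
    (hsum : px + py = 1) :
    (∃ C₁ C₂ γx γx' γy γy' : ℝ,
        C₁ ∈ Set.Icc (-1 : ℝ) 1 ∧ C₂ ∈ Set.Icc (-1 : ℝ) 1 ∧
        K₁ = γx + γx' ∧ K₂ = γy + γy' ∧
        K₃ = px * (γy - γy') - py * (γx - γx') ∧
        2 * |γx| ≤ 1 + C₁ ∧ 2 * |γx'| ≤ 1 - C₁ ∧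
        2 * |γy| ≤ 1 - C₂ ∧ 2 * |γy'| ≤ 1 + C₂) ↔
    (|K₁| ≤ 1 ∧ |K₂| ≤ 1 ∧
      ∃ C₁ C₂ : ℝ, C₁ ∈ Set.Icc (-1 : ℝ) 1 ∧ C₂ ∈ Set.Icc (-1 : ℝ) 1 ∧
        -1 + py * |K₁ - C₁| + px * |K₂ - C₂| ≤ K₃ ∧
        K₃ ≤ 1 - py * |K₁ + C₁| - px * |K₂ + C₂|) := by
  constructor
  · rintro ⟨C₁, C₂, γx, γx', γy, γy', hC₁, hC₂, hK₁, hK₂, hK₃, hx, hx', hy, hy'⟩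
    obtain ⟨hC₁l, hC₁r⟩ := hC₁
    obtain ⟨hC₂l, hC₂r⟩ := hC₂
    have ax1 := le_abs_self γx; have ax2 := neg_abs_le γx
    have ax1' := le_abs_self γx'; have ax2' := neg_abs_le γx'
    have ay1 := le_abs_self γy; have ay2 := neg_abs_le γy
    have ay1' := le_abs_self γy'; have ay2' := neg_abs_le γy'
    refine ⟨abs_le.mpr ⟨by linarith, by linarith⟩,
      abs_le.mpr ⟨by linarith, by linarith⟩, C₁, C₂, ⟨hC₁l, hC₁r⟩, ⟨hC₂l, hC₂r⟩, ?_, ?_⟩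
    · have hb1 : |K₁ - C₁| + γx - γx' ≤ 1 := by
        rcases abs_cases (K₁ - C₁) with ⟨h, _⟩ | ⟨h, _⟩ <;> rw [h] <;> linarith
      have hb2 : |K₂ - C₂| - γy + γy' ≤ 1 := by
        rcases abs_cases (K₂ - C₂) with ⟨h, _⟩ | ⟨h, _⟩ <;> rw [h] <;> linarith
      have m1 := mul_le_mul_of_nonneg_left hb1 hpy.le
      have m2 := mul_le_mul_of_nonneg_left hb2 hpx.le
      nlinarith [m1, m2]
    · have hb1 : |K₁ + C₁| - γx + γx' ≤ 1 := by
        rcases abs_cases (K₁ + C₁) with ⟨h, _⟩ | ⟨h, _⟩ <;> rw [h] <;> linarith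
      have hb2 : |K₂ + C₂| + γy - γy' ≤ 1 := by
        rcases abs_cases (K₂ + C₂) with ⟨h, _⟩ | ⟨h, _⟩ <;> rw [h] <;> linarith
      have m1 := mul_le_mul_of_nonneg_left hb1 hpy.le
      have m2 := mul_le_mul_of_nonneg_left hb2 hpx.le
      nlinarith [m1, m2]
  · rintro ⟨hK₁, hK₂, C₁, C₂, ⟨hC₁l, hC₁r⟩, ⟨hC₂l, hC₂r⟩, hlo, hhi⟩
    rw [abs_le] at hK₁ hK₂
    set Lx := -1 + |K₁ + C₁| with hLx
    set Ux := 1 - |K₁ - C₁| with hUx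
    set Ly := -1 + |K₂ - C₂| with hLy
    set Uy := 1 - |K₂ + C₂| with hUy
    have hxLU : Lx ≤ Ux := by
      rcases abs_cases (K₁ + C₁) with ⟨h1, _⟩ | ⟨h1, _⟩ <;>
        rcases abs_cases (K₁ - C₁) with ⟨h2, _⟩ | ⟨h2, _⟩ <;>
        rw [hLx, hUx, h1, h2] <;> linarith
    have hyLU : Ly ≤ Uy := by
      rcases abs_cases (K₂ + C₂) with ⟨h1, _⟩ | ⟨h1, _⟩ <;>
        rcases abs_cases (K₂ - C₂) with ⟨h2, _⟩ | ⟨h2, _⟩ <;>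
        rw [hLy, hUy, h1, h2] <;> linarith
    set lo := px * Ly - py * Ux with hlo'
    set hi := px * Uy - py * Lx with hhi'
    have hloK : lo ≤ K₃ := by
      rw [hlo', hLy, hUx]; nlinarith [hlo]
    have hKhi : K₃ ≤ hi := by
      rw [hhi', hUy, hLx]; nlinarith [hhi]
    have hdle : lo ≤ hi := le_trans hloK hKhi
    set lam : ℝ := if hi - lo = 0 then 0 else (K₃ - lo) / (hi - lo) with hlam
    have hlam0 : 0 ≤ lam := by
      rw [hlam]; split
      · exact le_refl 0
      · rename_i h
        have hpos : 0 < hi - lo := lt_of_le_of_ne (by linarith) (Ne.symm h)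
        exact div_nonneg (by linarith) hpos.le
    have hlam1 : lam ≤ 1 := by
      rw [hlam]; split
      · norm_num
      · rename_i h
        have hpos : 0 < hi - lo := lt_of_le_of_ne (by linarith) (Ne.symm h)
        rw [div_le_one hpos]; linarith
    have hkey : lo + lam * (hi - lo) = K₃ := by
      rw [hlam]; split
      · rename_i h; linarith
      · rename_i h; field_simp; ring
    set tx := (1 - lam) * Ux + lam * Lx with htx
    set ty := (1 - lam) * Ly + lam * Uy with hty
    have htxL : Lx ≤ tx := by
      rw [htx]
      have := mul_nonneg (by linarith : (0:ℝ) ≤ 1 - lam) (by linarith : (0:ℝ) ≤ Ux - Lx)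
      linarith [this]
    have htxU : tx ≤ Ux := by
      rw [htx]
      have := mul_nonneg hlam0 (by linarith : (0:ℝ) ≤ Ux - Lx)
      linarith [this]
    have htyL : Ly ≤ ty := by
      rw [hty]
      have := mul_nonneg hlam0 (by linarith : (0:ℝ) ≤ Uy - Ly)
      linarith [this]
    have htyU : ty ≤ Uy := by
      rw [hty]
      have := mul_nonneg (by linarith : (0:ℝ) ≤ 1 - lam) (by linarith : (0:ℝ) ≤ Uy - Ly)
      linarith [this]
    have hKt : px * ty - py * tx = K₃ := by
      rw [htx, hty]; rw [hlo', hhi'] at hkey; linear_combination hkey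
    have a1 := le_abs_self (K₁ + C₁); have a2 := neg_abs_le (K₁ + C₁)
    have a3 := le_abs_self (K₁ - C₁); have a4 := neg_abs_le (K₁ - C₁)
    have b1 := le_abs_self (K₂ + C₂); have b2 := neg_abs_le (K₂ + C₂)
    have b3 := le_abs_self (K₂ - C₂); have b4 := neg_abs_le (K₂ - C₂)
    have habs : ∀ x : ℝ, 2 * |x / 2| = |x| := by
      intro x; rw [abs_div, abs_two]; ring
    rw [hUx] at htxU; rw [hLx] at htxL
    rw [hUy] at htyU; rw [hLy] at htyL
    refine ⟨C₁, C₂, (K₁ + tx) / 2, (K₁ - tx) / 2, (K₂ + ty) / 2, (K₂ - ty) / 2,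
      ⟨hC₁l, hC₁r⟩, ⟨hC₂l, hC₂r⟩, by ring, by ring, by rw [← hKt]; ring, ?_, ?_, ?_, ?_⟩
    · rw [habs, abs_le]; exact ⟨by linarith, by linarith⟩
    · rw [habs, abs_le]; exact ⟨by linarith, by linarith⟩
    · rw [habs, abs_le]; exact ⟨by linarith, by linarith⟩
    · rw [habs, abs_le]; exact ⟨by linarith, by linarith⟩
end

section
/- Let μ, X, Y > 0. The rectangular wrench cone equals the image under the linear map Φ : (f₁, f₂, f₃, f₄) ↦ (Σfᵢˣ, Σfᵢʸ, Σfᵢᶻ, Y(f₁ᶻ−f₂ᶻ−f₃ᶻ+f₄ᶻ), −X(f₁ᶻ+f₂ᶻ−f₃ᶻ−f₄ᶻ), X(f₁ʸ+f₂ʸ−f₃ʸ−f₄ʸ) − Y(f₁ˣ−f₂ˣ−f₃ˣ+f₄ˣ)) of the product of four linearized friction cones K = {(a,b,c) : |a| ≤ μc, |b| ≤ μc, c ≥ 0}. In particular, since Φ is linear and K⁴ is a polyhedral convex cone, the wrench cone is a polyhedral convex cone in ℝ⁶ with the 16 facet inequalities listed in the paper. -/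
/-- The linearized friction cone at a contact point. -/
def frictionCone (μ : ℝ) : Set (Fin 3 → ℝ) :=
  {v | |v 0| ≤ μ * v 2 ∧ |v 1| ≤ μ * v 2 ∧ 0 ≤ v 2}

/-- The linear map sending four corner contact forces to the resultant wrench
at the center of the rectangle `[-X,X] × [-Y,Y]`. -/
def wrenchMap (X Y : ℝ) (f : Fin 4 → Fin 3 → ℝ) : Fin 6 → ℝ :=
  ![f 0 0 + f 1 0 + f 2 0 + f 3 0,
    f 0 1 + f 1 1 + f 2 1 + f 3 1,
    f 0 2 + f 1 2 + f 2 2 + f 3 2,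
    Y * (f 0 2 - f 1 2 - f 2 2 + f 3 2),
    -X * (f 0 2 + f 1 2 - f 2 2 - f 3 2),
    X * (f 0 1 + f 1 1 - f 2 1 - f 3 1) - Y * (f 0 0 - f 1 0 - f 2 0 + f 3 0)]

private lemma split_force (μ c d p : ℝ) (hc : 0 ≤ c) (hd : 0 ≤ d)
    (hp : |p| ≤ μ * (c + d)) :
    ∃ a b : ℝ, a + b = p ∧ |a| ≤ μ * c ∧ |b| ≤ μ * d := by
  rcases eq_or_lt_of_le (by linarith : (0:ℝ) ≤ c + d) with h | h
  · have hc0 : c = 0 := by linarith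
    have hd0 : d = 0 := by linarith
    have hp0 : p = 0 := by
      have h2 : |p| ≤ 0 := by rw [hc0, hd0] at hp; simpa using hp
      exact abs_eq_zero.mp (le_antisymm h2 (abs_nonneg p))
    exact ⟨0, 0, by simp [hp0], by simp [hc0], by simp [hd0]⟩
  · refine ⟨p * c / (c + d), p * d / (c + d), ?_, ?_, ?_⟩
    · field_simp
    · rw [abs_div, abs_of_pos h, div_le_iff₀ h, abs_mul, abs_of_nonneg hc]
      calc |p| * c ≤ (μ * (c + d)) * c := mul_le_mul_of_nonneg_right hp hc
        _ = μ * c * (c + d) := by ring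
    · rw [abs_div, abs_of_pos h, div_le_iff₀ h, abs_mul, abs_of_nonneg hd]
      calc |p| * d ≤ (μ * (c + d)) * d := mul_le_mul_of_nonneg_right hp hd
        _ = μ * d * (c + d) := by ring

set_option maxHeartbeats 1000000 in
/-- The rectangular wrench cone is the image of the product of the four
linearized friction cones under the wrench map: a polyhedral convex cone with
the 16 facet inequalities of the paper. -/
theorem wrench_cone_eq_image
    (X Y μ : ℝ) (hX : 0 < X) (hY : 0 < Y) (hμ : 0 < μ) :
    (wrenchMap X Y) '' {f | ∀ i, f i ∈ frictionCone μ} =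
    {w : Fin 6 → ℝ | |w 0| ≤ μ * w 2 ∧ |w 1| ≤ μ * w 2 ∧ 0 ≤ w 2 ∧
      |w 3| ≤ Y * w 2 ∧ |w 4| ≤ X * w 2 ∧
      -μ * (X + Y) * w 2 + |Y * w 0 - μ * w 3| + |X * w 1 - μ * w 4| ≤ w 5 ∧
      w 5 ≤ μ * (X + Y) * w 2 - |Y * w 0 + μ * w 3| - |X * w 1 + μ * w 4|} := by
  ext w
  simp only [Set.mem_image, Set.mem_setOf_eq]
  constructor
  · rintro ⟨f, hf, rfl⟩
    obtain ⟨ha0, hb0, hc0⟩ := hf 0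
    obtain ⟨ha1, hb1, hc1⟩ := hf 1
    obtain ⟨ha2, hb2, hc2⟩ := hf 2
    obtain ⟨ha3, hb3, hc3⟩ := hf 3
    obtain ⟨ha0l, ha0r⟩ := abs_le.mp ha0
    obtain ⟨ha1l, ha1r⟩ := abs_le.mp ha1
    obtain ⟨ha2l, ha2r⟩ := abs_le.mp ha2
    obtain ⟨ha3l, ha3r⟩ := abs_le.mp ha3
    obtain ⟨hb0l, hb0r⟩ := abs_le.mp hb0
    obtain ⟨hb1l, hb1r⟩ := abs_le.mp hb1
    obtain ⟨hb2l, hb2r⟩ := abs_le.mp hb2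
    obtain ⟨hb3l, hb3r⟩ := abs_le.mp hb3
    have e0 : wrenchMap X Y f 0 = f 0 0 + f 1 0 + f 2 0 + f 3 0 := rfl
    have e1 : wrenchMap X Y f 1 = f 0 1 + f 1 1 + f 2 1 + f 3 1 := rfl
    have e2 : wrenchMap X Y f 2 = f 0 2 + f 1 2 + f 2 2 + f 3 2 := rfl
    have e3 : wrenchMap X Y f 3 = Y * (f 0 2 - f 1 2 - f 2 2 + f 3 2) := rfl
    have e4 : wrenchMap X Y f 4 = -X * (f 0 2 + f 1 2 - f 2 2 - f 3 2) := rfl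
    have e5 : wrenchMap X Y f 5 =
        X * (f 0 1 + f 1 1 - f 2 1 - f 3 1) - Y * (f 0 0 - f 1 0 - f 2 0 + f 3 0) := rfl
    rw [e0, e1, e2, e3, e4, e5]
    have hyc := fun (u v : ℝ) (h : u ≤ v) => mul_le_mul_of_nonneg_left h hY.le
    have hxc := fun (u v : ℝ) (h : u ≤ v) => mul_le_mul_of_nonneg_left h hX.le
    have hP : |Y * (f 0 0 + f 1 0 + f 2 0 + f 3 0) + μ * (Y * (f 0 2 - f 1 2 - f 2 2 + f 3 2))|
        ≤ Y * (μ * (f 0 2 + f 1 2 + f 2 2 + f 3 2) + (f 0 0 - f 1 0 - f 2 0 + f 3 0)) := by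
      rw [abs_le]
      constructor
      · linarith [hyc _ _ ha1l, hyc _ _ ha2l, hyc _ _ ha0r, hyc _ _ ha3r,
          hyc _ _ ha0l, hyc _ _ ha3l, hyc _ _ ha1r, hyc _ _ ha2r]
      · linarith [hyc _ _ ha1l, hyc _ _ ha2l, hyc _ _ ha0r, hyc _ _ ha3r,
          hyc _ _ ha0l, hyc _ _ ha3l, hyc _ _ ha1r, hyc _ _ ha2r]
    have hM : |Y * (f 0 0 + f 1 0 + f 2 0 + f 3 0) - μ * (Y * (f 0 2 - f 1 2 - f 2 2 + f 3 2))|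
        ≤ Y * (μ * (f 0 2 + f 1 2 + f 2 2 + f 3 2) - (f 0 0 - f 1 0 - f 2 0 + f 3 0)) := by
      rw [abs_le]
      constructor
      · linarith [hyc _ _ ha1l, hyc _ _ ha2l, hyc _ _ ha0r, hyc _ _ ha3r,
          hyc _ _ ha0l, hyc _ _ ha3l, hyc _ _ ha1r, hyc _ _ ha2r]
      · linarith [hyc _ _ ha1l, hyc _ _ ha2l, hyc _ _ ha0r, hyc _ _ ha3r,
          hyc _ _ ha0l, hyc _ _ ha3l, hyc _ _ ha1r, hyc _ _ ha2r]
    have hQ : |X * (f 0 1 + f 1 1 + f 2 1 + f 3 1) + μ * (-X * (f 0 2 + f 1 2 - f 2 2 - f 3 2))|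
        ≤ X * (μ * (f 0 2 + f 1 2 + f 2 2 + f 3 2) - (f 0 1 + f 1 1 - f 2 1 - f 3 1)) := by
      rw [abs_le]
      constructor
      · linarith [hxc _ _ hb0l, hxc _ _ hb1l, hxc _ _ hb2r, hxc _ _ hb3r,
          hxc _ _ hb0r, hxc _ _ hb1r, hxc _ _ hb2l, hxc _ _ hb3l]
      · linarith [hxc _ _ hb0l, hxc _ _ hb1l, hxc _ _ hb2r, hxc _ _ hb3r,
          hxc _ _ hb0r, hxc _ _ hb1r, hxc _ _ hb2l, hxc _ _ hb3l]
    have hN : |X * (f 0 1 + f 1 1 + f 2 1 + f 3 1) - μ * (-X * (f 0 2 + f 1 2 - f 2 2 - f 3 2))|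
        ≤ X * (μ * (f 0 2 + f 1 2 + f 2 2 + f 3 2) + (f 0 1 + f 1 1 - f 2 1 - f 3 1)) := by
      rw [abs_le]
      constructor
      · linarith [hxc _ _ hb0l, hxc _ _ hb1l, hxc _ _ hb2r, hxc _ _ hb3r,
          hxc _ _ hb0r, hxc _ _ hb1r, hxc _ _ hb2l, hxc _ _ hb3l]
      · linarith [hxc _ _ hb0l, hxc _ _ hb1l, hxc _ _ hb2r, hxc _ _ hb3r,
          hxc _ _ hb0r, hxc _ _ hb1r, hxc _ _ hb2l, hxc _ _ hb3l]
    refine ⟨?_, ?_, by linarith, ?_, ?_, ?_, ?_⟩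
    · rw [abs_le]; constructor <;> linarith
    · rw [abs_le]; constructor <;> linarith
    · rw [abs_le]
      constructor
      · linarith [hyc _ _ hc0, hyc _ _ hc1, hyc _ _ hc2, hyc _ _ hc3]
      · linarith [hyc _ _ hc0, hyc _ _ hc1, hyc _ _ hc2, hyc _ _ hc3]
    · rw [abs_le]
      constructor
      · linarith [hxc _ _ hc0, hxc _ _ hc1, hxc _ _ hc2, hxc _ _ hc3]
      · linarith [hxc _ _ hc0, hxc _ _ hc1, hxc _ _ hc2, hxc _ _ hc3]
    · linarith [hM, hN]
    · linarith [hP, hQ]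
  · rintro ⟨h0, h1, h2, h3, h4, h5l, h5u⟩
    rcases h2.eq_or_lt with hw2 | hw2
    · -- degenerate case: w 2 = 0, hence w = 0
      have e0 : w 0 = 0 := by
        have h := h0; rw [← hw2, mul_zero] at h
        exact abs_eq_zero.mp (le_antisymm h (abs_nonneg _))
      have e1 : w 1 = 0 := by
        have h := h1; rw [← hw2, mul_zero] at h
        exact abs_eq_zero.mp (le_antisymm h (abs_nonneg _))
      have e3 : w 3 = 0 := by
        have h := h3; rw [← hw2, mul_zero] at h
        exact abs_eq_zero.mp (le_antisymm h (abs_nonneg _))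
      have e4 : w 4 = 0 := by
        have h := h4; rw [← hw2, mul_zero] at h
        exact abs_eq_zero.mp (le_antisymm h (abs_nonneg _))
      have e5 : w 5 = 0 := by
        rw [← hw2, e0, e1, e3, e4] at h5l h5u
        simp at h5l h5u
        linarith
      refine ⟨fun _ _ => 0, fun i => ?_, ?_⟩
      · exact ⟨by simp, by simp, le_refl 0⟩
      · funext j
        fin_cases j <;>
          simp [wrenchMap, e0, e1, e3, e4, e5, ← hw2] <;> rfl
    · -- main case: w 2 > 0
      obtain ⟨h0l, h0r⟩ := abs_le.mp h0
      obtain ⟨h1l, h1r⟩ := abs_le.mp h1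
      obtain ⟨h3l, h3r⟩ := abs_le.mp h3
      obtain ⟨h4l, h4r⟩ := abs_le.mp h4
      set P := Y * w 0 + μ * w 3 with hPd
      set M := Y * w 0 - μ * w 3 with hMd
      set Q := X * w 1 + μ * w 4 with hQd
      set N := X * w 1 - μ * w 4 with hNd
      have hPM : |P| + |M| ≤ 2 * (μ * (Y * w 2)) := by
        rcases abs_cases P with ⟨hp, _⟩ | ⟨hp, _⟩ <;> rcases abs_cases M with ⟨hm, _⟩ | ⟨hm, _⟩ <;>
          linarith [mul_le_mul_of_nonneg_left h0r hY.le, mul_le_mul_of_nonneg_left h0l hY.le,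
            mul_le_mul_of_nonneg_left h3r hμ.le, mul_le_mul_of_nonneg_left h3l hμ.le]
      have hNQ : |N| + |Q| ≤ 2 * (μ * (X * w 2)) := by
        rcases abs_cases N with ⟨hn, _⟩ | ⟨hn, _⟩ <;> rcases abs_cases Q with ⟨hq, _⟩ | ⟨hq, _⟩ <;>
          linarith [mul_le_mul_of_nonneg_left h1r hX.le, mul_le_mul_of_nonneg_left h1l hX.le,
            mul_le_mul_of_nonneg_left h4r hμ.le, mul_le_mul_of_nonneg_left h4l hμ.le]
      set Amax := μ * (Y * w 2) - |M| with hAmaxd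
      set Amin := |P| - μ * (Y * w 2) with hAmind
      set Bmax := μ * (X * w 2) - |Q| with hBmaxd
      set Bmin := |N| - μ * (X * w 2) with hBmind
      set B := min Bmax (w 5 + Amax) with hBd
      set A := B - w 5 with hAd
      have hBle : B ≤ Bmax := min_le_left _ _
      have hBle2 : B ≤ w 5 + Amax := min_le_right _ _
      have hBge : Bmin ≤ B := by
        refine le_min (by linarith) ?_
        rw [hBmind, hAmaxd]
        linarith
      have hAle : A ≤ Amax := by rw [hAd]; linarith
      have hAge : Amin ≤ A := by
        rcases le_total Bmax (w 5 + Amax) with h | h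
        · have hB : B = Bmax := min_eq_left h
          rw [hAd, hB, hAmind, hBmaxd]
          linarith
        · have hB : B = w 5 + Amax := min_eq_right h
          rw [hAd, hB, hAmind, hAmaxd]
          linarith
      have hA1 : Y * w 0 + A ≤ μ * (Y * w 2 + w 3) := by
        have := le_abs_self M
        rw [hMd] at this
        rw [hAmaxd] at hAle
        linarith
      have hA2 : -(μ * (Y * w 2 + w 3)) ≤ Y * w 0 + A := by
        have := neg_abs_le P
        rw [hPd] at this
        rw [hAmind] at hAge
        linarith
      have hA3 : Y * w 0 - A ≤ μ * (Y * w 2 - w 3) := by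
        have := le_abs_self P
        rw [hPd] at this
        rw [hAmind] at hAge
        linarith
      have hA4 : -(μ * (Y * w 2 - w 3)) ≤ Y * w 0 - A := by
        have := neg_abs_le M
        rw [hMd] at this
        rw [hAmaxd] at hAle
        linarith
      have hB1 : X * w 1 + B ≤ μ * (X * w 2 - w 4) := by
        have := le_abs_self Q
        rw [hQd] at this
        rw [hBmaxd] at hBle
        linarith
      have hB2 : -(μ * (X * w 2 - w 4)) ≤ X * w 1 + B := by
        have := neg_abs_le N
        rw [hNd] at this
        rw [hBmind] at hBge
        linarith
      have hB3 : X * w 1 - B ≤ μ * (X * w 2 + w 4) := by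
        have := le_abs_self N
        rw [hNd] at this
        rw [hBmind] at hBge
        linarith
      have hB4 : -(μ * (X * w 2 + w 4)) ≤ X * w 1 - B := by
        have := neg_abs_le Q
        rw [hQd] at this
        rw [hBmaxd] at hBle
        linarith
      have hY3p : 0 ≤ Y * w 2 + w 3 := by linarith
      have hY3m : 0 ≤ Y * w 2 - w 3 := by linarith
      have hX4p : 0 ≤ X * w 2 + w 4 := by linarith
      have hX4m : 0 ≤ X * w 2 - w 4 := by linarith
      have hD : (0:ℝ) < 4 * X * Y * w 2 := by positivity
      set c0 := (Y * w 2 + w 3) * (X * w 2 - w 4) / (4 * X * Y * w 2) with hc0d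
      set c1 := (Y * w 2 - w 3) * (X * w 2 - w 4) / (4 * X * Y * w 2) with hc1d
      set c2 := (Y * w 2 - w 3) * (X * w 2 + w 4) / (4 * X * Y * w 2) with hc2d
      set c3 := (Y * w 2 + w 3) * (X * w 2 + w 4) / (4 * X * Y * w 2) with hc3d
      have hc0n : 0 ≤ c0 := div_nonneg (mul_nonneg hY3p hX4m) hD.le
      have hc1n : 0 ≤ c1 := div_nonneg (mul_nonneg hY3m hX4m) hD.le
      have hc2n : 0 ≤ c2 := div_nonneg (mul_nonneg hY3m hX4p) hD.le
      have hc3n : 0 ≤ c3 := div_nonneg (mul_nonneg hY3p hX4p) hD.le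
      have h2Y : (0:ℝ) < 2 * Y := by positivity
      have h2X : (0:ℝ) < 2 * X := by positivity
      have hcs03 : c0 + c3 = (Y * w 2 + w 3) / (2 * Y) := by
        rw [hc0d, hc3d]; field_simp; ring
      have hcs12 : c1 + c2 = (Y * w 2 - w 3) / (2 * Y) := by
        rw [hc1d, hc2d]; field_simp; ring
      have hcs01 : c0 + c1 = (X * w 2 - w 4) / (2 * X) := by
        rw [hc0d, hc1d]; field_simp; ring
      have hcs23 : c2 + c3 = (X * w 2 + w 4) / (2 * X) := by
        rw [hc2d, hc3d]; field_simp; ring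
      have hmc03 : μ * (c0 + c3) * (2 * Y) = μ * (Y * w 2 + w 3) := by
        rw [hcs03]; field_simp
      have hmc12 : μ * (c1 + c2) * (2 * Y) = μ * (Y * w 2 - w 3) := by
        rw [hcs12]; field_simp
      have hmc01 : μ * (c0 + c1) * (2 * X) = μ * (X * w 2 - w 4) := by
        rw [hcs01]; field_simp
      have hmc23 : μ * (c2 + c3) * (2 * X) = μ * (X * w 2 + w 4) := by
        rw [hcs23]; field_simp
      have hsp03 : |(Y * w 0 + A) / (2 * Y)| ≤ μ * (c0 + c3) := by
        rw [abs_le]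
        constructor
        · rw [le_div_iff₀ h2Y]; linarith
        · rw [div_le_iff₀ h2Y]; linarith
      have hsp12 : |(Y * w 0 - A) / (2 * Y)| ≤ μ * (c1 + c2) := by
        rw [abs_le]
        constructor
        · rw [le_div_iff₀ h2Y]; linarith
        · rw [div_le_iff₀ h2Y]; linarith
      have hsp01 : |(X * w 1 + B) / (2 * X)| ≤ μ * (c0 + c1) := by
        rw [abs_le]
        constructor
        · rw [le_div_iff₀ h2X]; linarith
        · rw [div_le_iff₀ h2X]; linarith
      have hsp23 : |(X * w 1 - B) / (2 * X)| ≤ μ * (c2 + c3) := by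
        rw [abs_le]
        constructor
        · rw [le_div_iff₀ h2X]; linarith
        · rw [div_le_iff₀ h2X]; linarith
      obtain ⟨a0, a3, ha03, ha0, ha3⟩ := split_force μ c0 c3 _ hc0n hc3n hsp03
      obtain ⟨a1, a2, ha12, ha1, ha2⟩ := split_force μ c1 c2 _ hc1n hc2n hsp12
      obtain ⟨b0, b1, hb01, hb0, hb1⟩ := split_force μ c0 c1 _ hc0n hc1n hsp01
      obtain ⟨b2, b3, hb23, hb2, hb3⟩ := split_force μ c2 c3 _ hc2n hc3n hsp23
      have hYa03 : Y * (a0 + a3) = (Y * w 0 + A) / 2 := by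
        rw [ha03]; field_simp
      have hYa12 : Y * (a1 + a2) = (Y * w 0 - A) / 2 := by
        rw [ha12]; field_simp
      have hXb01 : X * (b0 + b1) = (X * w 1 + B) / 2 := by
        rw [hb01]; field_simp
      have hXb23 : X * (b2 + b3) = (X * w 1 - B) / 2 := by
        rw [hb23]; field_simp
      have hsuma : a0 + a1 + a2 + a3 = w 0 := by
        have h : Y * (a0 + a1 + a2 + a3) = Y * w 0 := by linarith
        exact mul_left_cancel₀ hY.ne' h
      have hsumb : b0 + b1 + b2 + b3 = w 1 := by
        have h : X * (b0 + b1 + b2 + b3) = X * w 1 := by linarith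
        exact mul_left_cancel₀ hX.ne' h
      have hsumc : c0 + c1 + c2 + c3 = w 2 := by
        rw [hc0d, hc1d, hc2d, hc3d]; field_simp; ring
      have hw3 : Y * (c0 - c1 - c2 + c3) = w 3 := by
        rw [hc0d, hc1d, hc2d, hc3d]; field_simp; ring
      have hw4 : -X * (c0 + c1 - c2 - c3) = w 4 := by
        rw [hc0d, hc1d, hc2d, hc3d]; field_simp; ring
      have hw5 : X * (b0 + b1 - b2 - b3) - Y * (a0 - a1 - a2 + a3) = w 5 := by
        have h1 : X * (b0 + b1 - b2 - b3) = B := by linarith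
        have h2 : Y * (a0 - a1 - a2 + a3) = A := by linarith
        rw [h1, h2, hAd]; ring
      refine ⟨![![a0, b0, c0], ![a1, b1, c1], ![a2, b2, c2], ![a3, b3, c3]], ?_, ?_⟩
      · intro i
        fin_cases i
        · exact ⟨ha0, hb0, hc0n⟩
        · exact ⟨ha1, hb1, hc1n⟩
        · exact ⟨ha2, hb2, hc2n⟩
        · exact ⟨ha3, hb3, hc3n⟩
      · funext j
        fin_cases j
        · exact hsuma
        · exact hsumb
        · exact hsumc
        · exact hw3
        · exact hw4
        · exact hw5
end
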